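/- Let F ⊆ k[X_0,…,X_{m−1}] be finite with Weil descent system F' with respect to a basis α_0,…,α_{n−1} of k over k'. Then: (1) Z_{k'}(F') = Z(F'_1), i.e., the solutions of F' with all coordinates in k' coincide with the solutions of F'_1 over an algebraic closure; and (2) the map sending (a_{ij})_{i,j} to (Σ_{j=0}^{n−1} α_j a_{0j}, …, Σ_{j=0}^{n−1} α_j a_{m−1,j}) is a bijection from Z_{k'}(F') onto Z_k(F). -/

import Mathlib

open MvPolynomial

lemma wd_aeval_comp {R S σ : Type*} [CommSemiring R] [CommSemiring S] [Algebra R S]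
    (a : σ → R) (f : MvPolynomial σ R) :
    aeval (fun p => algebraMap R S (a p)) f = algebraMap R S (eval a f) := by
  rw [aeval_def, eval, coe_eval₂Hom, eval₂_comp_left (algebraMap R S) (RingHom.id R) a]
  simp [Function.comp_def]

lemma wd_root_mem_range {k' K : Type} [Field k'] [Fintype k'] [Field K] [Algebra k' K]
    (q : ℕ) (hq : q = Fintype.card k') (y : K) (hy : y ^ q - y = 0) :
    ∃ a : k', algebraMap k' K a = y := by
  classical
  by_contra h
  push_neg at h
  set P : Polynomial K := Polynomial.X ^ q - Polynomial.X with hP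
  have hq2 : 1 < q := by rw [hq]; exact Fintype.one_lt_card
  have hdeg : P.natDegree = q := by
    rw [hP, Polynomial.natDegree_sub_eq_left_of_natDegree_lt] <;>
      simp [Polynomial.natDegree_X_pow, hq2]
  have hP0 : P ≠ 0 := by
    intro h0
    rw [h0, Polynomial.natDegree_zero] at hdeg
    omega
  set T : Finset K := Finset.univ.image (algebraMap k' K) with hT
  have hTcard : T.card = q := by
    rw [hT, Finset.card_image_of_injective _ (algebraMap k' K).injective,
      Finset.card_univ, hq]
  have hroot : insert y T ⊆ P.roots.toFinset := by
    intro z hz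
    rw [Multiset.mem_toFinset, Polynomial.mem_roots hP0]
    rcases Finset.mem_insert.mp hz with rfl | hz
    · simpa [Polynomial.IsRoot, hP] using hy
    · rcases Finset.mem_image.mp hz with ⟨a, _, rfl⟩
      simp [Polynomial.IsRoot, hP, ← map_pow, hq, FiniteField.pow_card]
  have hyT : y ∉ T := by
    intro hyT
    rcases Finset.mem_image.mp hyT with ⟨a, _, ha⟩
    exact h a ha
  have h1 := Finset.card_le_card hroot
  have h2 : (insert y T).card = q + 1 := by
    rw [Finset.card_insert_of_notMem hyT, hTcard]
  have h3 : P.roots.toFinset.card ≤ q :=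
    le_trans (Multiset.toFinset_card_le _) (by rw [← hdeg]; exact Polynomial.card_roots' P)
  omega

/-- For the Weil descent system `F'` of `F` with respect to a basis `α` of `k/k'`:
(1) `Z_{k'}(F') = Z(F'₁)`, i.e. the solutions of `F'₁` over an algebraic closure `K` of
`k'` are exactly the (images of the) solutions of `F'` with all coordinates in `k'`; and
(2) `(a_{ij}) ↦ (∑_j a_{0j} α_j, …, ∑_j a_{m-1,j} α_j)` is a bijection from `Z_{k'}(F')`
onto `Z_k(F)`. -/
theorem weil_descent_solutions
    {k' k K : Type} [Field k'] [Fintype k'] [Field k] [Algebra k' k]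
    [Field K] [Algebra k' K] [IsAlgClosed K]
    (q n m : ℕ) (hq : q = Fintype.card k')
    (α : Module.Basis (Fin n) k' k)
    (F : Finset (MvPolynomial (Fin m) k))
    (comp : MvPolynomial (Fin m) k → Fin n → MvPolynomial (Fin m × Fin n) k')
    (hcomp : ∀ f ∈ F,
      aeval (fun i : Fin m => ∑ j : Fin n, MvPolynomial.C (α j) * X (i, j)) f
        = ∑ j : Fin n,
            MvPolynomial.C (α j) * MvPolynomial.map (algebraMap k' k) (comp f j))
    (F' F'1 : Set (MvPolynomial (Fin m × Fin n) k'))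
    (hF' : F' = {p | ∃ f ∈ F, ∃ j : Fin n, p = comp f j})
    (hF'1 : F'1 = F' ∪ Set.range (fun p : Fin m × Fin n => X p ^ q - X p)) :
    ({x : Fin m × Fin n → K | ∀ f ∈ F'1, MvPolynomial.aeval x f = 0}
        = (fun a : Fin m × Fin n → k' => (algebraMap k' K) ∘ a) ''
            {a : Fin m × Fin n → k' | ∀ f ∈ F', MvPolynomial.eval a f = 0}) ∧
    Set.BijOn
      (fun (a : Fin m × Fin n → k') (i : Fin m) => ∑ j : Fin n, a (i, j) • α j)
      {a : Fin m × Fin n → k' | ∀ f ∈ F', MvPolynomial.eval a f = 0}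
      {x : Fin m → k | ∀ f ∈ F, MvPolynomial.eval x f = 0} := by
  subst hF'1 hF'
  -- The key identity relating evaluation of `f` and of its components.
  have key : ∀ (a : Fin m × Fin n → k') (f : MvPolynomial (Fin m) k), f ∈ F →
      eval (fun i : Fin m => ∑ j : Fin n, a (i, j) • α j) f
        = ∑ j : Fin n, (eval a (comp f j)) • α j := by
    intro a f hf
    have h := congrArg (eval (fun p : Fin m × Fin n => algebraMap k' k (a p))) (hcomp f hf)
    rw [aeval_eq_bind₁] at h
    have hL : eval (fun p : Fin m × Fin n => algebraMap k' k (a p))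
        ((bind₁ (fun i : Fin m => ∑ j : Fin n, MvPolynomial.C (α j) * X (i, j))) f)
        = eval (fun i : Fin m => ∑ j : Fin n, a (i, j) • α j) f := by
      rw [eval, eval₂Hom_bind₁]
      apply eval₂Hom_congr rfl _ rfl
      funext i
      simp [Algebra.smul_def, mul_comm, eval]
    have hR : eval (fun p : Fin m × Fin n => algebraMap k' k (a p))
        (∑ j : Fin n, MvPolynomial.C (α j) * MvPolynomial.map (algebraMap k' k) (comp f j))
        = ∑ j : Fin n, (eval a (comp f j)) • α j := by
      rw [map_sum]
      refine Finset.sum_congr rfl fun j _ => ?_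
      rw [map_mul, eval_C, eval_map]
      have : MvPolynomial.eval₂ (algebraMap k' k) (fun p : Fin m × Fin n => algebraMap k' k (a p))
          (comp f j) = algebraMap k' k (eval a (comp f j)) := by
        have := wd_aeval_comp (S := k) a (comp f j)
        rw [aeval_def] at this
        exact this
      rw [this, Algebra.smul_def, mul_comm]
    rw [hL, hR] at h
    exact h
  constructor
  · -- Part (1)
    ext x
    simp only [Set.mem_setOf_eq, Set.mem_image]
    constructor
    · intro hx
      have hx' : ∀ p : Fin m × Fin n, ∃ a : k', algebraMap k' K a = x p := by
        intro p
        apply wd_root_mem_range q hq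
        have := hx (X p ^ q - X p) (Or.inr ⟨p, rfl⟩)
        simpa using this
      choose a ha using hx'
      have hxa : x = fun p => algebraMap k' K (a p) := by
        funext p; exact (ha p).symm
      refine ⟨a, fun f hf => ?_, ?_⟩
      · have h0 := hx f (Or.inl hf)
        rw [hxa, wd_aeval_comp] at h0
        exact (algebraMap k' K).injective (by simpa using h0)
      · funext p; exact ha p
    · rintro ⟨a, ha, rfl⟩
      intro f hf
      rcases hf with hf | ⟨p, rfl⟩
      · show aeval (fun p => algebraMap k' K (a p)) f = 0
        rw [wd_aeval_comp, ha f hf, map_zero]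
      · show aeval (fun p => algebraMap k' K (a p)) (X p ^ q - X p) = 0
        have h1 : (a p) ^ q = a p := by rw [hq]; exact FiniteField.pow_card _
        rw [map_sub, map_pow, aeval_X, ← map_pow, h1, sub_self]
  · -- Part (2)
    have hinj : Function.Injective (fun c : Fin n → k' => ∑ j : Fin n, c j • α j) := by
      intro c d hcd
      have : α.equivFun.symm c = α.equivFun.symm d := by
        rw [Module.Basis.equivFun_symm_apply, Module.Basis.equivFun_symm_apply]
        exact hcd
      exact α.equivFun.symm.injective this
    refine ⟨?_, ?_, ?_⟩
    · intro a ha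
      intro f hf
      rw [key a f hf]
      have : ∀ j : Fin n, eval a (comp f j) = 0 := fun j => ha (comp f j) ⟨f, hf, j, rfl⟩
      simp [this]
    · intro a _ b _ hab
      funext p
      exact congrFun (hinj (congrFun hab p.1)) p.2
    · intro x hx
      refine ⟨fun p => α.repr (x p.1) p.2, ?_, ?_⟩
      · rintro g ⟨f, hf, j, rfl⟩
        have hsum : (fun i : Fin m => ∑ j : Fin n, α.repr (x i) j • α j) = x := by
          funext i
          exact α.sum_repr (x i)
        have h0 := key (fun p => α.repr (x p.1) p.2) f hf
        rw [hsum, hx f hf] at h0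
        have : (fun j : Fin n => eval (fun p : Fin m × Fin n => α.repr (x p.1) p.2) (comp f j))
            = fun _ => (0 : k') := by
          apply hinj
          simp [← h0]
        exact congrFun this j
      · funext i
        exact α.sum_repr (x i)
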